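/- Let A be an integral domain and J ⊆ A a proper ideal that is infinite as a set, and suppose A is J-adically complete. Let I₁, …, I_N be prime ideals of A⟦t⟧ such that (J) + (t) ⊄ I_i for every 1 ≤ i ≤ N, where (J) is the ideal of A⟦t⟧ generated by the image of J and (t) is the principal ideal generated by t. Then there exists an element c ∈ (J) such that t + c ∉ I_i for all 1 ≤ i ≤ N. -/

import Mathlib

open Pointwise


/-- Let `A` be an integral domain and `J ⊆ A` a proper infinite ideal such that `A` is
`J`-adically complete.  Let `I₁, …, I_N` be prime ideals of `A⟦t⟧` none of which contains
the ideal `(J) + (t)`.  Then there is `c ∈ (J)` with `t + c ∉ I_i` for all `i`. -/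
theorem powerSeries_translation_lemma
    {A : Type*} [CommRing A] [IsDomain A] (J : Ideal A) [IsAdicComplete J A]
    (hJproper : J ≠ ⊤) (hJinf : (J : Set A).Infinite)
    (N : ℕ) (I : Fin N → Ideal (PowerSeries A))
    (hprime : ∀ i, (I i).IsPrime)
    (hnle : ∀ i, ¬(Ideal.map (PowerSeries.C : A →+* PowerSeries A) J ⊔
      Ideal.span {(PowerSeries.X : PowerSeries A)} ≤ I i)) :
    ∃ c ∈ Ideal.map (PowerSeries.C : A →+* PowerSeries A) J, ∀ i, PowerSeries.X + c ∉ I i := by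
  classical
  by_contra hcon
  push_neg at hcon
  set C : A →+* PowerSeries A := PowerSeries.C with hC
  -- the contracted primes
  set P : Fin N → Ideal A := fun i => (I i).comap C with hP
  -- the homomorphisms from J to the quotients
  set φ : ∀ i : Fin N, J →+ A ⧸ P i :=
    fun i => ((Ideal.Quotient.mk (P i)).toAddMonoidHom).comp J.subtype.toAddMonoidHom with hφ
  set H : ∀ i : Fin N, AddSubgroup J := fun i => (φ i).ker with hH
  have hφ_apply : ∀ (i : Fin N) (x : J), φ i x = Ideal.Quotient.mk (P i) (x : A) :=
    fun i x => rfl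
  -- bad indices
  set s : Finset (Fin N) :=
    Finset.univ.filter (fun i => ∃ r : J, PowerSeries.X + C r ∈ I i) with hs
  set g : Fin N → J := fun i =>
    if h : ∃ r : J, PowerSeries.X + C r ∈ I i then h.choose else 0 with hg
  have hgmem : ∀ i ∈ s, PowerSeries.X + C (g i) ∈ I i := by
    intro i hi
    rw [hs, Finset.mem_filter] at hi
    obtain ⟨-, h⟩ := hi
    simp only [hg, dif_pos h]
    exact h.choose_spec
  -- the coset covering of J
  have hcovers : ⋃ i ∈ s, (g i) +ᵥ ((H i : AddSubgroup J) : Set J) = Set.univ := by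
    rw [Set.eq_univ_iff_forall]
    intro x
    obtain ⟨i, hXi⟩ := hcon (C x) (Ideal.mem_map_of_mem C x.2)
    have hiS : i ∈ s := by
      rw [hs, Finset.mem_filter]
      exact ⟨Finset.mem_univ i, ⟨x, hXi⟩⟩
    have hgi := hgmem i hiS
    have hsub : C ((x : A) - (g i : A)) ∈ I i := by
      have : (PowerSeries.X + C x) - (PowerSeries.X + C (g i)) ∈ I i :=
        Ideal.sub_mem _ hXi hgi
      simpa [map_sub] using this
    refine Set.mem_iUnion₂.mpr ⟨i, hiS, ?_⟩
    refine Set.mem_vadd_set.mpr ⟨x - g i, ?_, by simp⟩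
    have : (φ i) (x - g i) = 0 := by
      rw [hφ_apply, Ideal.Quotient.eq_zero_iff_mem, hP]
      simpa [Ideal.mem_comap, map_sub] using hsub
    simpa [hH, SetLike.mem_coe, AddMonoidHom.mem_ker] using this
  obtain ⟨k, hks, hkfin⟩ := AddSubgroup.exists_finiteIndex_of_leftCoset_cover hcovers
  -- k is a bad index, so J is not contained in P k
  have hXk := hgmem k hks
  have hJnle : ¬ J ≤ P k := by
    intro hle
    apply hnle k
    have hCk : C (g k) ∈ I k := hle (g k).2
    have hX : (PowerSeries.X : PowerSeries A) ∈ I k := by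
      have : (PowerSeries.X + C (g k)) - C (g k) ∈ I k := Ideal.sub_mem _ hXk hCk
      simpa using this
    refine sup_le (Ideal.map_le_iff_le_comap.mpr hle) ?_
    rw [Ideal.span_le, Set.singleton_subset_iff]
    exact hX
  obtain ⟨x₀, hx₀J, hx₀P⟩ := SetLike.not_le_iff_exists.mp hJnle
  haveI := hprime k
  haveI : (P k).IsPrime := Ideal.IsPrime.comap C
  -- the quotient A ⧸ P k is an infinite domain
  haveI : Infinite (A ⧸ P k) := by
    rw [← not_finite_iff_infinite]
    intro hfin
    have hfield : IsField (A ⧸ P k) := Finite.isField_of_domain _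
    have hmax : (P k).IsMaximal := Ideal.Quotient.maximal_of_isField _ hfield
    exact hJnle <| (IsAdicComplete.le_jacobson_bot (R := A) (I := J)).trans
      (sInf_le ⟨bot_le, hmax⟩)
  -- the image of J in A ⧸ P k is infinite
  have hx₀ne : Ideal.Quotient.mk (P k) x₀ ≠ 0 := by
    rw [Ne, Ideal.Quotient.eq_zero_iff_mem]; exact hx₀P
  have hinj : Function.Injective (fun d : A ⧸ P k => d * Ideal.Quotient.mk (P k) x₀) :=
    mul_left_injective₀ hx₀ne
  have hrange : Set.range (fun d : A ⧸ P k => d * Ideal.Quotient.mk (P k) x₀) ⊆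
      Set.range (φ k) := by
    rintro - ⟨d, rfl⟩
    obtain ⟨a, rfl⟩ := Ideal.Quotient.mk_surjective d
    exact ⟨⟨a * x₀, J.mul_mem_left a hx₀J⟩, by simp [hφ_apply, map_mul]⟩
  -- hence the quotient J ⧸ H k is infinite, contradicting finite index
  haveI : Infinite (J ⧸ H k) := by
    rw [← not_finite_iff_infinite]
    intro hfin
    have h1 : (Set.range (φ k)).Finite := by
      have : Set.range (φ k) ⊆ Set.range (QuotientAddGroup.kerLift (φ k)) := by
        rintro - ⟨x, rfl⟩
        exact ⟨QuotientAddGroup.mk x, QuotientAddGroup.kerLift_mk _ _⟩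
      exact (Set.finite_range _).subset this
    exact (Set.infinite_range_of_injective hinj) (h1.subset hrange)
  exact hkfin.index_ne_zero (Nat.card_eq_zero_of_infinite)
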